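/- For 𝔞 = 0 and j ∈ ℕ: ∫_0^z e^{-x/2} (d/dx){L_{j+1}^0(x) - L_{j-1}^0(x)} dx = 2 e^{-z/2} {L_j^0(z) - L_{j-1}^0(z)} for all z ≥ 0. -/

import Mathlib

open Filter Real MeasureTheory

/-- Generalized binomial coefficient `C(x, m) = x(x-1)⋯(x-m+1)/m!` for `m ∈ ℕ₀`, `0` for `m < 0`. -/
noncomputable def gchoose (x : ℝ) (m : ℤ) : ℝ :=
  if 0 ≤ m then (∏ i ∈ Finset.range m.toNat, (x - (i : ℝ))) / (Nat.factorial m.toNat : ℝ) else 0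

/-- Generalized Laguerre polynomial `L_j^α(x) = Σ_{ℓ=0}^j ((-1)^ℓ/ℓ!) C(j+α, j-ℓ) x^ℓ`. -/
noncomputable def lagL (j : ℕ) (α : ℝ) : ℝ → ℝ :=
  fun x => ∑ l ∈ Finset.range (j + 1),
    ((-1 : ℝ) ^ l / (Nat.factorial l : ℝ)) * gchoose ((j : ℝ) + α) ((j : ℤ) - l) * x ^ l

lemma prod_range_cast (n k : ℕ) (hk : k ≤ n) :
    (∏ i ∈ Finset.range k, ((n : ℝ) - (i : ℝ))) = (n.descFactorial k : ℝ) := by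
  induction k with
  | zero => simp
  | succ k ih =>
    rw [Finset.prod_range_succ, ih (le_of_lt (Nat.lt_of_succ_le hk)), Nat.descFactorial_succ]
    push_cast [Nat.le_of_succ_le hk]
    ring

lemma gchoose_nat (n l : ℕ) (hl : l ≤ n) :
    gchoose (n : ℝ) ((n : ℤ) - l) = (n.choose (n - l) : ℝ) := by
  have h0 : (0:ℤ) ≤ (n : ℤ) - l := by omega
  have ht : ((n : ℤ) - l).toNat = n - l := by omega
  rw [gchoose, if_pos h0, ht, prod_range_cast n (n - l) (Nat.sub_le n l),
    Nat.descFactorial_eq_factorial_mul_choose]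
  push_cast
  rw [mul_comm, mul_div_assoc, div_self (by positivity), mul_one]

noncomputable def Lf (j : ℕ) (x : ℝ) : ℝ :=
  ∑ l ∈ Finset.range (j + 1), ((-1 : ℝ) ^ l / (Nat.factorial l : ℝ)) * (j.choose l : ℝ) * x ^ l

lemma lagL_eq (j : ℕ) : lagL j 0 = Lf j := by
  funext x
  unfold lagL Lf
  refine Finset.sum_congr rfl fun l hl => ?_
  have hl' : l ≤ j := Nat.lt_succ_iff.mp (Finset.mem_range.mp hl)
  rw [add_zero, gchoose_nat j l hl', Nat.choose_symm hl']

noncomputable def Df (j : ℕ) (x : ℝ) : ℝ :=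
  ∑ k ∈ Finset.range j, ((-1 : ℝ) ^ (k+1) / (Nat.factorial k : ℝ)) * (j.choose (k+1) : ℝ) * x ^ k

lemma hasDerivAt_Lf (j : ℕ) (x : ℝ) : HasDerivAt (Lf j) (Df j x) x := by
  have h : HasDerivAt (Lf j)
      (∑ l ∈ Finset.range (j + 1),
        ((-1 : ℝ) ^ l / (Nat.factorial l : ℝ)) * (j.choose l : ℝ) * ((l : ℝ) * x ^ (l - 1))) x := by
    apply HasDerivAt.fun_sum
    intro l _
    exact (hasDerivAt_pow l x).const_mul _
  have e : (∑ l ∈ Finset.range (j + 1),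
      ((-1 : ℝ) ^ l / (Nat.factorial l : ℝ)) * (j.choose l : ℝ) * ((l : ℝ) * x ^ (l - 1)))
      = Df j x := by
    rw [Finset.sum_range_succ']
    simp only [Nat.cast_zero, zero_mul, mul_zero, add_zero]
    unfold Df
    refine Finset.sum_congr rfl fun k _ => ?_
    have hfac : (Nat.factorial (k+1) : ℝ) = ((k:ℝ)+1) * (Nat.factorial k) := by
      push_cast [Nat.factorial_succ]; ring
    rw [Nat.add_sub_cancel, hfac]
    have h1 : ((k:ℝ)+1) ≠ 0 := by positivity
    have h2 : (Nat.factorial k : ℝ) ≠ 0 := by positivity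
    push_cast
    field_simp
  exact e ▸ h

lemma Df_succ (m : ℕ) (x : ℝ) : Df (m + 1) x = Df m x - Lf m x := by
  unfold Df Lf
  have hDf : (∑ k ∈ Finset.range m, ((-1 : ℝ) ^ (k+1) / (Nat.factorial k : ℝ)) * (m.choose (k+1) : ℝ) * x ^ k)
      = ∑ k ∈ Finset.range (m+1), ((-1 : ℝ) ^ (k+1) / (Nat.factorial k : ℝ)) * (m.choose (k+1) : ℝ) * x ^ k := by
    rw [Finset.sum_range_succ, Nat.choose_succ_self]
    simp
  rw [hDf, ← Finset.sum_sub_distrib]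
  refine Finset.sum_congr rfl fun k _ => ?_
  rw [Nat.choose_succ_succ]
  push_cast
  ring

lemma Lf_zero (j : ℕ) : Lf j 0 = 1 := by
  unfold Lf
  rw [Finset.sum_eq_single 0]
  · simp
  · intro l _ hl
    rw [zero_pow hl]; ring
  · simp

theorem G_integral_formula_zero_param (j : ℕ) (hj : 1 ≤ j) (z : ℝ) (hz : 0 ≤ z) :
    ∫ x in (0 : ℝ)..z, Real.exp (-x / 2) *
        deriv (fun y : ℝ => lagL (j + 1) 0 y - lagL (j - 1) 0 y) x
      = 2 * Real.exp (-z / 2) * (lagL j 0 z - lagL (j - 1) 0 z) := by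
  obtain ⟨m, rfl⟩ : ∃ m, j = m + 1 := ⟨j - 1, (Nat.succ_pred_eq_of_pos hj).symm⟩
  simp only [lagL_eq, Nat.add_sub_cancel]
  have hderiv : ∀ x : ℝ, deriv (fun y => Lf (m+1+1) y - Lf m y) x = Df (m+1+1) x - Df m x :=
    fun x => ((hasDerivAt_Lf (m+1+1) x).sub (hasDerivAt_Lf m x)).deriv
  have key : ∀ x : ℝ, HasDerivAt (fun y => 2 * Real.exp (-y/2) * (Lf (m+1) y - Lf m y))
      (Real.exp (-x/2) * (Df (m+1+1) x - Df m x)) x := by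
    intro x
    have hneg : HasDerivAt (fun y : ℝ => -y/2) (-1/2) x := by
      simpa using ((hasDerivAt_id x).neg.div_const 2)
    have he : HasDerivAt (fun y : ℝ => Real.exp (-y/2)) (Real.exp (-x/2) * (-1/2)) x :=
      (Real.hasDerivAt_exp _).comp x hneg
    have hp : HasDerivAt (fun y => Lf (m+1) y - Lf m y) (Df (m+1) x - Df m x) x :=
      (hasDerivAt_Lf _ x).sub (hasDerivAt_Lf _ x)
    have hmul := (he.const_mul 2).fun_mul hp
    refine hmul.congr_deriv ?_
    rw [Df_succ (m+1) x, Df_succ m x]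
    ring
  have hcont : Continuous fun x : ℝ => Real.exp (-x/2) * (Df (m+1+1) x - Df m x) := by
    apply Continuous.mul
    · exact Real.continuous_exp.comp (by fun_prop)
    · unfold Df; fun_prop
  simp only [hderiv]
  rw [intervalIntegral.integral_eq_sub_of_hasDerivAt (fun x _ => key x)
    (hcont.intervalIntegrable 0 z)]
  simp [Lf_zero]
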